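/- Let S be an inverse semigroup and A a filter in S. Then d(A) := (A⁻¹A)↑ and r(A) := (AA⁻¹)↑ are filters, and A is proper if and only if d(A) is proper. -/
import Mathlib


/-- An inverse semigroup with zero: associative multiplication, unique
generalized inverses, and a multiplicatively absorbing zero. -/
structure InvSemigroupZero (S : Type*) [Mul S] [Inv S] [Zero S] : Prop where
  mul_assoc : ∀ a b c : S, a * b * c = a * (b * c)
  mul_inv_mul : ∀ a : S, a * a⁻¹ * a = a
  inv_mul_inv : ∀ a : S, a⁻¹ * a * a⁻¹ = a⁻¹
  inv_unique : ∀ a t : S, a * t * a = a → t * a * t = t → t = a⁻¹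
  zero_mul : ∀ a : S, 0 * a = 0
  mul_zero : ∀ a : S, a * 0 = 0

def IsIdem {S : Type*} [Mul S] (e : S) : Prop := e * e = e

/-- The natural partial order: `s ≤ t` iff `s = t e` for some idempotent `e`. -/
def natLe {S : Type*} [Mul S] (s t : S) : Prop := ∃ e : S, IsIdem e ∧ s = t * e

/-- `s` and `t` are compatible iff `s⁻¹ t` and `s t⁻¹` are idempotents. -/
def Compat {S : Type*} [Mul S] [Inv S] (s t : S) : Prop :=
  IsIdem (s⁻¹ * t) ∧ IsIdem (s * t⁻¹)

/-- Upward closure of a subset in the natural partial order. -/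
def upc {S : Type*} [Mul S] (X : Set S) : Set S := {s | ∃ x ∈ X, natLe x s}

/-- A filter: nonempty, upward closed and downward directed. -/
def IsFilt {S : Type*} [Mul S] (A : Set S) : Prop :=
  A.Nonempty ∧ (∀ a ∈ A, ∀ s, natLe a s → s ∈ A) ∧
    ∀ a ∈ A, ∀ b ∈ A, ∃ c ∈ A, natLe c a ∧ natLe c b

/-- A proper filter: a filter not containing `0`. -/
def IsPFilt {S : Type*} [Mul S] [Zero S] (A : Set S) : Prop := IsFilt A ∧ (0 : S) ∉ A

def dF {S : Type*} [Mul S] [Inv S] (A : Set S) : Set S :=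
  upc {p | ∃ a ∈ A, ∃ b ∈ A, p = a⁻¹ * b}

def rF {S : Type*} [Mul S] [Inv S] (A : Set S) : Set S :=
  upc {p | ∃ a ∈ A, ∃ b ∈ A, p = a * b⁻¹}

def invF {S : Type*} [Inv S] (A : Set S) : Set S := Inv.inv '' A

def mulF {S : Type*} [Mul S] (A B : Set S) : Set S :=
  upc {p | ∃ a ∈ A, ∃ b ∈ B, p = a * b}

/-- An ultrafilter: a maximal proper filter. -/
def IsUltraF {S : Type*} [Mul S] [Zero S] (A : Set S) : Prop :=
  IsPFilt A ∧ ∀ B : Set S, IsPFilt B → A ⊆ B → A = B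

section Aux
variable {S : Type*} [Mul S] [Inv S] [Zero S] (hS : InvSemigroupZero S)
include hS

lemma aux_inv_idem {e : S} (he : IsIdem e) : e⁻¹ = e :=
  (hS.inv_unique e e (by rw [he, he]) (by rw [he, he])).symm

lemma aux_mul_idem {e f : S} (he : IsIdem e) (hf : IsIdem f) : IsIdem (e * f) := by
  letI : Semigroup S := ⟨hS.mul_assoc⟩
  set x := (e * f)⁻¹ with hx
  have h1 : e * f * x * (e * f) = e * f := hS.mul_inv_mul (e * f)
  have h2 : x * (e * f) * x = x := hS.inv_mul_inv (e * f)
  have hy : f * (x * e) = x := by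
    refine hS.inv_unique (e * f) (f * (x * e)) ?_ ?_
    · calc e * f * (f * (x * e)) * (e * f)
          = e * (f * f) * x * (e * e) * f := by simp only [mul_assoc]
        _ = e * f * x * (e * f) := by rw [he, hf]; simp only [mul_assoc]
        _ = e * f := h1
    · calc f * (x * e) * (e * f) * (f * (x * e))
          = f * (x * (e * e) * (f * f) * (x * e)) := by simp only [mul_assoc]
        _ = f * (x * (e * f) * x * e) := by rw [he, hf]; simp only [mul_assoc]
        _ = f * (x * e) := by rw [h2]
  have hxx : IsIdem x := by
    show x * x = x
    conv_lhs => rw [← hy]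
    calc f * (x * e) * (f * (x * e)) = f * (x * (e * f) * x * e) := by
          simp only [mul_assoc]
      _ = f * (x * e) := by rw [h2]
      _ = x := hy
  have : e * f = x⁻¹ := hS.inv_unique x (e * f) (by rw [h2]) (by rw [h1])
  rw [aux_inv_idem hS hxx] at this
  show e * f * (e * f) = e * f
  rw [this, hxx]

lemma aux_idem_comm {e f : S} (he : IsIdem e) (hf : IsIdem f) : e * f = f * e := by
  letI : Semigroup S := ⟨hS.mul_assoc⟩
  have hef := aux_mul_idem hS he hf
  have hfe := aux_mul_idem hS hf he
  have h1 : f * e = (e * f)⁻¹ := by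
    refine hS.inv_unique (e * f) (f * e) ?_ ?_
    · calc e * f * (f * e) * (e * f) = e * (f * f) * (e * e) * f := by simp only [mul_assoc]
        _ = e * f * (e * f) := by rw [he, hf]; simp only [mul_assoc]
        _ = e * f := hef
    · calc f * e * (e * f) * (f * e) = f * (e * e) * (f * f) * e := by simp only [mul_assoc]
        _ = f * e * (f * e) := by rw [he, hf]; simp only [mul_assoc]
        _ = f * e := hfe
  rw [h1, aux_inv_idem hS hef]

lemma aux_idem_mul_inv (a : S) : IsIdem (a * a⁻¹) := by
  show a * a⁻¹ * (a * a⁻¹) = a * a⁻¹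
  rw [← hS.mul_assoc, hS.mul_inv_mul]

lemma aux_idem_inv_mul (a : S) : IsIdem (a⁻¹ * a) := by
  show a⁻¹ * a * (a⁻¹ * a) = a⁻¹ * a
  rw [← hS.mul_assoc, hS.inv_mul_inv]

lemma aux_mul_inv_rev (a b : S) : (a * b)⁻¹ = b⁻¹ * a⁻¹ := by
  letI : Semigroup S := ⟨hS.mul_assoc⟩
  refine (hS.inv_unique (a * b) (b⁻¹ * a⁻¹) ?_ ?_).symm
  · calc a * b * (b⁻¹ * a⁻¹) * (a * b)
        = a * (b * b⁻¹ * (a⁻¹ * a)) * b := by simp only [mul_assoc]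
      _ = a * (a⁻¹ * a * (b * b⁻¹)) * b := by
          rw [aux_idem_comm hS (aux_idem_mul_inv hS b) (aux_idem_inv_mul hS a)]
      _ = a * a⁻¹ * a * (b * b⁻¹ * b) := by simp only [mul_assoc]
      _ = a * b := by rw [hS.mul_inv_mul, hS.mul_inv_mul]
  · calc b⁻¹ * a⁻¹ * (a * b) * (b⁻¹ * a⁻¹)
        = b⁻¹ * (a⁻¹ * a * (b * b⁻¹)) * a⁻¹ := by simp only [mul_assoc]
      _ = b⁻¹ * (b * b⁻¹ * (a⁻¹ * a)) * a⁻¹ := by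
          rw [aux_idem_comm hS (aux_idem_mul_inv hS b) (aux_idem_inv_mul hS a)]
      _ = b⁻¹ * b * b⁻¹ * (a⁻¹ * a * a⁻¹) := by simp only [mul_assoc]
      _ = b⁻¹ * a⁻¹ := by rw [hS.inv_mul_inv, hS.inv_mul_inv]

lemma aux_le_refl (s : S) : natLe s s :=
  ⟨s⁻¹ * s, aux_idem_inv_mul hS s, by rw [← hS.mul_assoc, hS.mul_inv_mul]⟩

lemma aux_le_trans {s t u : S} (h1 : natLe s t) (h2 : natLe t u) : natLe s u := by
  obtain ⟨e, he, rfl⟩ := h1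
  obtain ⟨f, hf, rfl⟩ := h2
  exact ⟨f * e, aux_mul_idem hS hf he, hS.mul_assoc u f e⟩

lemma aux_le_of_left {f t : S} (hf : IsIdem f) : natLe (f * t) t := by
  letI : Semigroup S := ⟨hS.mul_assoc⟩
  refine ⟨t⁻¹ * (f * t), ?_, ?_⟩
  · show t⁻¹ * (f * t) * (t⁻¹ * (f * t)) = t⁻¹ * (f * t)
    calc t⁻¹ * (f * t) * (t⁻¹ * (f * t)) = t⁻¹ * (f * (t * t⁻¹) * (f * t)) := by
          simp only [mul_assoc]
      _ = t⁻¹ * (f * (f * (t * t⁻¹ * t))) := by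
          rw [hS.mul_assoc f (t*t⁻¹) (f*t), ← hS.mul_assoc (t*t⁻¹) f t,
            aux_idem_comm hS (aux_idem_mul_inv hS t) hf]
          simp only [mul_assoc]
      _ = t⁻¹ * (f * f * t) := by rw [hS.mul_inv_mul]; simp only [mul_assoc]
      _ = t⁻¹ * (f * t) := by rw [hf]
  · calc f * t = f * (t * t⁻¹ * t) := by rw [hS.mul_inv_mul]
      _ = f * (t * t⁻¹) * t := by simp only [mul_assoc]
      _ = t * t⁻¹ * f * t := by rw [aux_idem_comm hS hf (aux_idem_mul_inv hS t)]
      _ = t * (t⁻¹ * (f * t)) := by simp only [mul_assoc]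

lemma aux_left_of_le {s t : S} (h : natLe s t) : ∃ f, IsIdem f ∧ s = f * t := by
  letI : Semigroup S := ⟨hS.mul_assoc⟩
  obtain ⟨e, he, rfl⟩ := h
  refine ⟨t * (e * t⁻¹), ?_, ?_⟩
  · show t * (e * t⁻¹) * (t * (e * t⁻¹)) = t * (e * t⁻¹)
    calc t * (e * t⁻¹) * (t * (e * t⁻¹))
        = t * (e * (t⁻¹ * t) * (e * t⁻¹)) := by simp only [mul_assoc]
      _ = t * (e * (e * (t⁻¹ * t * t⁻¹))) := by
          rw [hS.mul_assoc e (t⁻¹*t) (e*t⁻¹), ← hS.mul_assoc (t⁻¹*t) e t⁻¹,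
            aux_idem_comm hS (aux_idem_inv_mul hS t) he]
          simp only [mul_assoc]
      _ = t * (e * e * t⁻¹) := by rw [hS.inv_mul_inv]; simp only [mul_assoc]
      _ = t * (e * t⁻¹) := by rw [he]
  · calc t * e = t * (t⁻¹ * t) * e := by rw [← hS.mul_assoc, hS.mul_inv_mul]
      _ = t * (t⁻¹ * t * e) := by simp only [mul_assoc]
      _ = t * (e * (t⁻¹ * t)) := by rw [aux_idem_comm hS (aux_idem_inv_mul hS t) he]
      _ = t * (e * t⁻¹) * t := by simp only [mul_assoc]

lemma aux_inv_mono {s t : S} (h : natLe s t) : natLe s⁻¹ t⁻¹ := by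
  obtain ⟨e, he, rfl⟩ := h
  rw [aux_mul_inv_rev hS, aux_inv_idem hS he]
  exact aux_le_of_left hS he

lemma aux_mul_mono {s t u v : S} (h1 : natLe s t) (h2 : natLe u v) :
    natLe (s * u) (t * v) := by
  obtain ⟨f, hf, rfl⟩ := aux_left_of_le hS h1
  obtain ⟨e, he, rfl⟩ := h2
  have : f * t * (v * e) = f * (t * v * e) := by
    rw [hS.mul_assoc, hS.mul_assoc]
  rw [this]
  exact aux_le_trans hS (aux_le_of_left hS hf) ⟨e, he, rfl⟩

lemma aux_le_zero {x : S} (h : natLe x 0) : x = 0 := by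
  obtain ⟨e, _, rfl⟩ := h; exact hS.zero_mul e

end Aux

/-- For a filter `A`, both `d(A) = (A⁻¹A)↑` and `r(A) = (AA⁻¹)↑` are filters,
and `A` is proper iff `d(A)` is proper. -/
theorem dF_rF_are_filters {S : Type*} [Mul S] [Inv S] [Zero S]
    (hS : InvSemigroupZero S) (A : Set S) (hA : IsFilt A) :
    IsFilt (dF A) ∧ IsFilt (rF A) ∧ (IsPFilt A ↔ IsPFilt (dF A)) := by
  obtain ⟨hne, hupA, hdir⟩ := hA
  have upcl : ∀ X : Set S, ∀ a ∈ upc X, ∀ s, natLe a s → s ∈ upc X := by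
    rintro X a ⟨p, hp, hpa⟩ s has
    exact ⟨p, hp, aux_le_trans hS hpa has⟩
  have dmem : ∀ c ∈ A, c⁻¹ * c ∈ dF A := fun c hc =>
    ⟨c⁻¹ * c, ⟨c, hc, c, hc, rfl⟩, aux_le_refl hS _⟩
  have rmem : ∀ c ∈ A, c * c⁻¹ ∈ rF A := fun c hc =>
    ⟨c * c⁻¹, ⟨c, hc, c, hc, rfl⟩, aux_le_refl hS _⟩
  have dkey : ∀ x ∈ dF A, ∃ c ∈ A, natLe (c⁻¹ * c) x := by
    rintro x ⟨p, ⟨a, ha, b, hb, rfl⟩, hpx⟩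
    obtain ⟨c, hc, hca, hcb⟩ := hdir a ha b hb
    exact ⟨c, hc, aux_le_trans hS (aux_mul_mono hS (aux_inv_mono hS hca) hcb) hpx⟩
  have rkey : ∀ x ∈ rF A, ∃ c ∈ A, natLe (c * c⁻¹) x := by
    rintro x ⟨p, ⟨a, ha, b, hb, rfl⟩, hpx⟩
    obtain ⟨c, hc, hca, hcb⟩ := hdir a ha b hb
    exact ⟨c, hc, aux_le_trans hS (aux_mul_mono hS hca (aux_inv_mono hS hcb)) hpx⟩
  obtain ⟨a0, ha0⟩ := hne
  have hdF : IsFilt (dF A) := by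
    refine ⟨⟨a0⁻¹ * a0, dmem a0 ha0⟩, upcl _, ?_⟩
    intro x hx y hy
    obtain ⟨c, hc, hcx⟩ := dkey x hx
    obtain ⟨d, hd, hdy⟩ := dkey y hy
    obtain ⟨k, hk, hkc, hkd⟩ := hdir c hc d hd
    refine ⟨k⁻¹ * k, dmem k hk, ?_, ?_⟩
    · exact aux_le_trans hS (aux_mul_mono hS (aux_inv_mono hS hkc) hkc) hcx
    · exact aux_le_trans hS (aux_mul_mono hS (aux_inv_mono hS hkd) hkd) hdy
  have hrF : IsFilt (rF A) := by
    refine ⟨⟨a0 * a0⁻¹, rmem a0 ha0⟩, upcl _, ?_⟩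
    intro x hx y hy
    obtain ⟨c, hc, hcx⟩ := rkey x hx
    obtain ⟨d, hd, hdy⟩ := rkey y hy
    obtain ⟨k, hk, hkc, hkd⟩ := hdir c hc d hd
    refine ⟨k * k⁻¹, rmem k hk, ?_, ?_⟩
    · exact aux_le_trans hS (aux_mul_mono hS hkc (aux_inv_mono hS hkc)) hcx
    · exact aux_le_trans hS (aux_mul_mono hS hkd (aux_inv_mono hS hkd)) hdy
  refine ⟨hdF, hrF, ?_, ?_⟩
  · rintro ⟨-, h0⟩
    refine ⟨hdF, fun hz => ?_⟩
    obtain ⟨c, hc, hle⟩ := dkey 0 hz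
    have h1 : c⁻¹ * c = 0 := aux_le_zero hS hle
    have h2 : c = 0 := by
      rw [← hS.mul_inv_mul c, hS.mul_assoc, h1, hS.mul_zero]
    exact h0 (h2 ▸ hc)
  · rintro ⟨-, h0⟩
    refine ⟨⟨⟨a0, ha0⟩, hupA, hdir⟩, fun hz => ?_⟩
    refine h0 ⟨0⁻¹ * 0, ⟨0, hz, 0, hz, rfl⟩, ?_⟩
    rw [hS.mul_zero]
    exact aux_le_refl hS 0
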